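/- Assume 0 < τ < τ*. If W_1 and W_2 are substochastic n×n matrices with W_1 ≤ W_2 entrywise, then B̃_{-1}(τ,W_1) ≤ B̃_{-1}(τ,W_2) entrywise. -/

import Mathlib

open MeasureTheory Matrix Filter

noncomputable section

/-- Entrywise Bochner integral over `(0,∞)` of a matrix-valued function. -/
def intP {n : ℕ} (f : ℝ → Matrix (Fin n) (Fin n) ℝ) : Matrix (Fin n) (Fin n) ℝ :=
  Matrix.of fun i j => ∫ x in Set.Ioi (0:ℝ), f x i j

/-- Matrix exponential. -/
def mexp {n : ℕ} (A : Matrix (Fin n) (Fin n) ℝ) : Matrix (Fin n) (Fin n) ℝ :=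
  NormedSpace.exp A

/-- `∫_0^x e^{Gs} ds` (entrywise). -/
def cumExp {n : ℕ} (G : Matrix (Fin n) (Fin n) ℝ) (x : ℝ) : Matrix (Fin n) (Fin n) ℝ :=
  Matrix.of fun i j => ∫ s in (0:ℝ)..x, mexp (s • G) i j

/-- Irreducibility of a square matrix: for all `i ≠ j` there is a path from `i` to `j`
along nonzero entries. -/
def MatIrr {m : Type*} (A : Matrix m m ℝ) : Prop :=
  ∀ i j : m, i ≠ j → ∃ (r : ℕ) (p : ℕ → m), p 0 = i ∧ p r = j ∧
    ∀ k < r, A (p k) (p (k+1)) ≠ 0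

/-- Spectral radius of a real matrix: supremum of the moduli of its complex eigenvalues. -/
def specRad {m : Type*} [Fintype m] [DecidableEq m] (A : Matrix m m ℝ) : ℝ :=
  sSup ((fun z : ℂ => ‖z‖) '' (spectrum ℂ (A.map (algebraMap ℝ ℂ))))

/-- `A` is an M-matrix: `A = s•I − B` with `B ≥ 0` entrywise and `ρ(B) ≤ s`. -/
def IsMMatrix {m : Type*} [Fintype m] [DecidableEq m] (A : Matrix m m ℝ) : Prop :=
  ∃ (s : ℝ) (B : Matrix m m ℝ), (∀ i j, 0 ≤ B i j) ∧ specRad B ≤ s ∧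
    A = s • (1 : Matrix m m ℝ) - B

/-- `A = M − N` is a regular splitting: `M` invertible, `M⁻¹ ≥ 0`, `N ≥ 0`. -/
def RegSplit {n : ℕ} (A M N : Matrix (Fin n) (Fin n) ℝ) : Prop :=
  A = M - N ∧ IsUnit M.det ∧ (∀ i j, 0 ≤ M⁻¹ i j) ∧ (∀ i j, 0 ≤ N i j)

/-- The complex characteristic roots (eigenvalues with algebraic multiplicity)
of a real matrix. -/
def cRoots {n : ℕ} (Y : Matrix (Fin n) (Fin n) ℝ) : Multiset ℂ :=
  ((Y.map (algebraMap ℝ ℂ)).charpoly).roots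

/-- substochastic matrix -/
def Substoch {n : ℕ} (W : Matrix (Fin n) (Fin n) ℝ) : Prop :=
  (∀ i j, 0 ≤ W i j) ∧ ∀ i, ∑ j, W i j ≤ 1

/-- stochastic matrix -/
def StochM {n : ℕ} (W : Matrix (Fin n) (Fin n) ℝ) : Prop :=
  (∀ i j, 0 ≤ W i j) ∧ ∀ i, ∑ j, W i j = 1

/-- subgenerator -/
def IsSubGen {n : ℕ} (Y : Matrix (Fin n) (Fin n) ℝ) : Prop :=
  (∀ i j, i ≠ j → 0 ≤ Y i j) ∧ ∀ i, ∑ j, Y i j ≤ 0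

/-- generator -/
def IsGen {n : ℕ} (Y : Matrix (Fin n) (Fin n) ℝ) : Prop :=
  (∀ i j, i ≠ j → 0 ≤ Y i j) ∧ ∀ i, ∑ j, Y i j = 0

/-- The data of a Markov-modulated Lévy process: phase generator `Q`, Brownian
drifts `a` and volatilities `s` (denoted `σ` in the paper), Lévy densities `ν`,
phase-change jump densities `μ`, and `U0 = U(0)` (the atoms at 0 of the jump
distributions). -/
structure Dat (n : ℕ) where
  Q : Matrix (Fin n) (Fin n) ℝ
  a : Fin n → ℝ
  s : Fin n → ℝ
  ν : Fin n → ℝ → ℝ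
  μ : Fin n → Fin n → ℝ → ℝ
  U0 : Matrix (Fin n) (Fin n) ℝ

namespace Dat

variable {n : ℕ} (D : Dat n)

/-- The standing assumptions of the paper. -/
structure Good : Prop where
  hn : 1 ≤ n
  hQoff : ∀ i j, i ≠ j → 0 ≤ D.Q i j
  hQrow : ∀ i, ∑ j, D.Q i j = 0
  hQirr : MatIrr D.Q
  hs : ∀ i, 0 < D.s i
  hνc : ∀ i, ContinuousOn (D.ν i) (Set.Ioi 0)
  hν0 : ∀ i, ∀ x ∈ Set.Ioi (0:ℝ), 0 ≤ D.ν i x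
  hνi : ∀ i, IntegrableOn (D.ν i) (Set.Ioi 0)
  hU0d : ∀ i, D.U0 i i = 1
  hU0o : ∀ i j, i ≠ j → D.U0 i j ∈ Set.Icc (0:ℝ) 1
  hμc : ∀ i j, i ≠ j → ContinuousOn (D.μ i j) (Set.Ioi 0)
  hμ0 : ∀ i j, ∀ x ∈ Set.Ioi (0:ℝ), 0 ≤ D.μ i j x
  hμi : ∀ i j, i ≠ j → IntegrableOn (D.μ i j) (Set.Ioi 0)
  hμU : ∀ i j, i ≠ j → D.U0 i j + ∫ x in Set.Ioi (0:ℝ), D.μ i j x = 1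
  hμd : ∀ i x, D.μ i i x = 0

/-- `Δ_a`. -/
def Da : Matrix (Fin n) (Fin n) ℝ := Matrix.diagonal D.a

/-- `Δ_{σ²}`. -/
def Ds : Matrix (Fin n) (Fin n) ℝ := Matrix.diagonal fun i => (D.s i)^2

/-- `Δ_ν(x)`. -/
def Dν (x : ℝ) : Matrix (Fin n) (Fin n) ℝ := Matrix.diagonal fun i => D.ν i x

/-- `Q ∘ μ(x)` (Hadamard product). -/
def Qμ (x : ℝ) : Matrix (Fin n) (Fin n) ℝ := Matrix.of fun i j => D.Q i j * D.μ i j x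

/-- The matrix function `F`. -/
def F (Y : Matrix (Fin n) (Fin n) ℝ) : Matrix (Fin n) (Fin n) ℝ :=
  D.Da * Y + (1/2 : ℝ) • (D.Ds * (Y * Y))
    + intP (fun x => D.Dν x * (mexp (x • Y) - 1))
    + Matrix.hadamard D.Q D.U0
    + intP (fun x => D.Qμ x * mexp (x • Y))

/-- The drift `κ`, relative to the stationary vector `π` of `Q`. -/
def kappa (π : Fin n → ℝ) : ℝ :=
  ∑ i, π i * (D.a i + (∫ x in Set.Ioi (0:ℝ), x * D.ν i x)
    + ∑ j, D.Q i j * ∫ x in Set.Ioi (0:ℝ), x * D.μ i j x)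

/-- `π` is the (positive) stationary probability vector of `Q`. -/
def IsStat (π : Fin n → ℝ) : Prop :=
  (∀ i, 0 < π i) ∧ (∀ j, ∑ i, π i * D.Q i j = 0) ∧ ∑ i, π i = 1

/-- `H(τ, W)`. -/
def H (τ : ℝ) (W : Matrix (Fin n) (Fin n) ℝ) : Matrix (Fin n) (Fin n) ℝ :=
  intP (fun x => D.Dν x * (mexp ((τ⁻¹ * x) • (W - 1)) - 1))

/-- `K(τ, W)`. -/
def K (τ : ℝ) (W : Matrix (Fin n) (Fin n) ℝ) : Matrix (Fin n) (Fin n) ℝ :=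
  Matrix.hadamard D.Q D.U0 + intP (fun x => D.Qμ x * mexp ((τ⁻¹ * x) • (W - 1)))

/-- `B_1`. -/
def B1 : Matrix (Fin n) (Fin n) ℝ := D.Ds

/-- `B_0(τ)`. -/
def B0 (τ : ℝ) : Matrix (Fin n) (Fin n) ℝ := (2*τ) • D.Da - (2:ℝ) • D.Ds

/-- `B_{-1}(τ, W)`. -/
def Bm1 (τ : ℝ) (W : Matrix (Fin n) (Fin n) ℝ) : Matrix (Fin n) (Fin n) ℝ :=
  D.Ds - (2*τ) • D.Da + (2*τ^2) • (D.H τ W + D.K τ W)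

/-- Equation (QW): `B₁W² + B₀(τ)W + B₋₁(τ,W) = 0`. -/
def QW (τ : ℝ) (W : Matrix (Fin n) (Fin n) ℝ) : Prop :=
  D.B1 * (W * W) + D.B0 τ * W + D.Bm1 τ W = 0

/-- `B̃_{-1}(τ, W) = −B₀(τ)⁻¹ B₋₁(τ,W)`. -/
def Btm1 (τ : ℝ) (W : Matrix (Fin n) (Fin n) ℝ) : Matrix (Fin n) (Fin n) ℝ :=
  -(D.B0 τ)⁻¹ * D.Bm1 τ W

/-- `B̃_1(τ) = −B₀(τ)⁻¹ B₁`. -/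
def Bt1 (τ : ℝ) : Matrix (Fin n) (Fin n) ℝ := -(D.B0 τ)⁻¹ * D.B1

/-- `0 < τ < τ*`: `troot i` is the unique positive root `τ_i` of the quadratic
`σ_i² − 2τ a_i + 2τ²(q_ii − ∫_0^∞ ν_i)`, `τ` is positive, `τ < σ_i²/a_i` whenever
`a_i > 0`, and `τ < τ_i` for all `i`. -/
def TauOK (troot : Fin n → ℝ) (τ : ℝ) : Prop :=
  (∀ i, 0 < troot i ∧
      (D.s i)^2 - 2 * troot i * D.a i
        + 2 * (troot i)^2 * (D.Q i i - ∫ x in Set.Ioi (0:ℝ), D.ν i x) = 0 ∧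
      ∀ t > 0, (D.s i)^2 - 2 * t * D.a i
        + 2 * t^2 * (D.Q i i - ∫ x in Set.Ioi (0:ℝ), D.ν i x) = 0 → t = troot i) ∧
  0 < τ ∧ (∀ i, 0 < D.a i → τ < (D.s i)^2 / D.a i) ∧ (∀ i, τ < troot i)

/-- `ρ_i = ∫_0^∞ ν_i`. -/
def rho (i : Fin n) : ℝ := ∫ x in Set.Ioi (0:ℝ), D.ν i x

/-- `λ_i = ρ_i + |q_ii|`. -/
def lam (i : Fin n) : ℝ := D.rho i + |D.Q i i|

/-- `b_i`. -/
def b (i : Fin n) : ℝ := (Real.sqrt ((D.a i)^2 + 2 * D.lam i * (D.s i)^2) + D.a i) / (D.s i)^2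

/-- `c_i`. -/
def c (i : Fin n) : ℝ := D.b i - 2 * D.a i / (D.s i)^2

/-- `Ĉ(X)`. -/
def Chat (X : Matrix (Fin n) (Fin n) ℝ) : Matrix (Fin n) (Fin n) ℝ :=
  Matrix.hadamard (D.Q - Matrix.diagonal fun i => D.Q i i) D.U0
    + intP (fun x => D.Dν x * mexp (x • (X - Matrix.diagonal D.b)))
    + intP (fun x => D.Qμ x * mexp (x • (X - Matrix.diagonal D.b)))

/-- `NARE(W)`: the Riccati equation `S² − Δ_c S − S Δ_b + 2Δ_{σ²}⁻¹ Ĉ(W) = 0` in `S`. -/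
def NARE (W S : Matrix (Fin n) (Fin n) ℝ) : Prop :=
  S * S - Matrix.diagonal D.c * S - S * Matrix.diagonal D.b
    + (2:ℝ) • (Matrix.diagonal (fun i => ((D.s i)^2)⁻¹) * D.Chat W) = 0

/-- `S` is the minimal nonnegative solution of `NARE(W)`. -/
def MinSolNARE (W S : Matrix (Fin n) (Fin n) ℝ) : Prop :=
  (∀ i j, 0 ≤ S i j) ∧ D.NARE W S ∧
    ∀ T, (∀ i j, 0 ≤ T i j) → D.NARE W T → ∀ i j, S i j ≤ T i j

/-- `Λ` (relative to `G`). -/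
def Lam (G : Matrix (Fin n) (Fin n) ℝ) : Matrix (Fin n) (Fin n) ℝ :=
  intP (fun x => D.Dν x * cumExp G x) + intP (fun x => D.Qμ x * cumExp G x)

/-- `Θ = −2Δ_a − Δ_{σ²}G − 2Λ` (relative to `G`). -/
def Theta (G : Matrix (Fin n) (Fin n) ℝ) : Matrix (Fin n) (Fin n) ℝ :=
  (-2 : ℝ) • D.Da - D.Ds * G - (2:ℝ) • D.Lam G

/-- Integrability of the first moments `∫ x ν_i(x) dx`, `∫ x μ_ij(x) dx`. -/
def Moments : Prop :=
  (∀ i, IntegrableOn (fun x => x * D.ν i x) (Set.Ioi (0:ℝ))) ∧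
  (∀ i j, IntegrableOn (fun x => x * D.μ i j x) (Set.Ioi (0:ℝ)))

end Dat

namespace Stmt4Aux

variable {n : ℕ}

lemma pow_entry_nonneg {W : Matrix (Fin n) (Fin n) ℝ} (hW : ∀ i j, 0 ≤ W i j) (k : ℕ) :
    ∀ i j, 0 ≤ (W ^ k) i j := by
  induction k with
  | zero =>
    intro i j
    rw [pow_zero, Matrix.one_apply]
    split <;> norm_num
  | succ k ih =>
    intro i j
    rw [pow_succ, Matrix.mul_apply]
    exact Finset.sum_nonneg fun l _ => mul_nonneg (ih i l) (hW l j)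

lemma pow_row_sum_le {W : Matrix (Fin n) (Fin n) ℝ} (hW : Substoch W) (k : ℕ) :
    ∀ i, ∑ j, (W ^ k) i j ≤ 1 := by
  induction k with
  | zero =>
    intro i
    simp [pow_zero, Matrix.one_apply, Finset.sum_ite_eq']
  | succ k ih =>
    intro i
    calc ∑ j, (W ^ (k+1)) i j = ∑ l, W i l * ∑ j, (W ^ k) l j := by
          rw [pow_succ']
          simp only [Matrix.mul_apply, Finset.mul_sum]
          rw [Finset.sum_comm]
      _ ≤ ∑ l, W i l * 1 := by
          refine Finset.sum_le_sum fun l _ => ?_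
          exact mul_le_mul_of_nonneg_left (ih l) (hW.1 i l)
      _ ≤ 1 := by simpa using hW.2 i

lemma pow_entry_le_one {W : Matrix (Fin n) (Fin n) ℝ} (hW : Substoch W) (k : ℕ) (i j : Fin n) :
    (W ^ k) i j ≤ 1 := by
  calc (W ^ k) i j ≤ ∑ l, (W ^ k) i l :=
        Finset.single_le_sum (fun l _ => pow_entry_nonneg hW.1 k i l) (Finset.mem_univ j)
    _ ≤ 1 := pow_row_sum_le hW k i

lemma pow_entry_mono {W₁ W₂ : Matrix (Fin n) (Fin n) ℝ} (h1 : ∀ i j, 0 ≤ W₁ i j)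
    (hle : ∀ i j, W₁ i j ≤ W₂ i j) (k : ℕ) :
    ∀ i j, (W₁ ^ k) i j ≤ (W₂ ^ k) i j := by
  have h2 : ∀ i j, 0 ≤ W₂ i j := fun i j => le_trans (h1 i j) (hle i j)
  induction k with
  | zero => intro i j; rw [pow_zero, pow_zero]
  | succ k ih =>
    intro i j
    rw [pow_succ, pow_succ, Matrix.mul_apply, Matrix.mul_apply]
    refine Finset.sum_le_sum fun l _ => ?_
    exact mul_le_mul (ih i l) (hle l j) (h1 l j) (pow_entry_nonneg h2 k i l)

lemma mexp_hasSum (A : Matrix (Fin n) (Fin n) ℝ) (i j : Fin n) :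
    HasSum (fun k : ℕ => ((k.factorial : ℝ))⁻¹ * (A ^ k) i j) (mexp A i j) := by
  letI : NormedRing (Matrix (Fin n) (Fin n) ℝ) := Matrix.linftyOpNormedRing
  letI : NormedAlgebra ℝ (Matrix (Fin n) (Fin n) ℝ) := Matrix.linftyOpNormedAlgebra
  have h := NormedSpace.exp_series_hasSum_exp' (𝕂 := ℝ) A
  have h3 := Pi.hasSum.mp (Pi.hasSum.mp h i) j
  simp [smul_eq_mul] at h3
  exact h3

lemma mexp_smul_hasSum (t : ℝ) (W : Matrix (Fin n) (Fin n) ℝ) (i j : Fin n) :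
    HasSum (fun k : ℕ => ((k.factorial : ℝ))⁻¹ * t ^ k * (W ^ k) i j) (mexp (t • W) i j) := by
  have h := mexp_hasSum (t • W) i j
  have : ∀ k : ℕ, ((t • W) ^ k) i j = t ^ k * (W ^ k) i j := by
    intro k; rw [smul_pow]; simp [Matrix.smul_apply, smul_eq_mul]
  simpa [this, mul_assoc] using h

lemma real_exp_hasSum (t : ℝ) :
    HasSum (fun k : ℕ => ((k.factorial : ℝ))⁻¹ * t ^ k) (Real.exp t) := by
  have h := NormedSpace.exp_series_hasSum_exp' (𝕂 := ℝ) t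
  simpa [Real.exp_eq_exp_ℝ, smul_eq_mul] using h

lemma mexp_smul_nonneg {W : Matrix (Fin n) (Fin n) ℝ} (hW : ∀ i j, 0 ≤ W i j) {t : ℝ}
    (ht : 0 ≤ t) (i j : Fin n) : 0 ≤ mexp (t • W) i j :=
  hasSum_le (fun k => mul_nonneg (mul_nonneg (by positivity) (pow_nonneg ht k))
    (pow_entry_nonneg hW k i j)) hasSum_zero (mexp_smul_hasSum t W i j)

lemma mexp_smul_le {W : Matrix (Fin n) (Fin n) ℝ} (hW : Substoch W) {t : ℝ}
    (ht : 0 ≤ t) (i j : Fin n) : mexp (t • W) i j ≤ Real.exp t := by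
  refine hasSum_le (fun k => ?_) (mexp_smul_hasSum t W i j) (real_exp_hasSum t)
  have h1 : ((k.factorial : ℝ))⁻¹ * t ^ k ≥ 0 := by positivity
  calc ((k.factorial : ℝ))⁻¹ * t ^ k * (W ^ k) i j
      ≤ ((k.factorial : ℝ))⁻¹ * t ^ k * 1 :=
        mul_le_mul_of_nonneg_left (pow_entry_le_one hW k i j) h1
    _ = ((k.factorial : ℝ))⁻¹ * t ^ k := mul_one _

lemma mexp_smul_mono {W₁ W₂ : Matrix (Fin n) (Fin n) ℝ} (h1 : ∀ i j, 0 ≤ W₁ i j)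
    (hle : ∀ i j, W₁ i j ≤ W₂ i j) {t : ℝ} (ht : 0 ≤ t) (i j : Fin n) :
    mexp (t • W₁) i j ≤ mexp (t • W₂) i j := by
  refine hasSum_le (fun k => ?_) (mexp_smul_hasSum t W₁ i j) (mexp_smul_hasSum t W₂ i j)
  exact mul_le_mul_of_nonneg_left (pow_entry_mono h1 hle k i j) (by positivity)

lemma mexp_smul_sub_one (W : Matrix (Fin n) (Fin n) ℝ) (t : ℝ) :
    mexp (t • (W - 1)) = Real.exp (-t) • mexp (t • W) := by
  have h1 : t • (W - 1) = t • W + (-t) • (1 : Matrix (Fin n) (Fin n) ℝ) := by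
    rw [smul_sub]; rw [neg_smul]; abel
  have hc : Commute (t • W) ((-t) • (1 : Matrix (Fin n) (Fin n) ℝ)) :=
    ((Commute.one_right (t • W)).smul_right (-t))
  rw [mexp, h1, Matrix.exp_add_of_commute _ _ hc]
  have h2 : NormedSpace.exp ((-t) • (1 : Matrix (Fin n) (Fin n) ℝ))
      = Real.exp (-t) • (1 : Matrix (Fin n) (Fin n) ℝ) := by
    have : ((-t) • (1 : Matrix (Fin n) (Fin n) ℝ)) = algebraMap ℝ _ (-t) := by
      rw [Algebra.algebraMap_eq_smul_one]
    rw [this]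
    letI : NormedRing (Matrix (Fin n) (Fin n) ℝ) := Matrix.linftyOpNormedRing
    letI : NormedAlgebra ℝ (Matrix (Fin n) (Fin n) ℝ) := Matrix.linftyOpNormedAlgebra
    have h := NormedSpace.algebraMap_exp_comm (𝕂 := ℝ) (𝔸 := Matrix (Fin n) (Fin n) ℝ) (-t)
    rw [← Real.exp_eq_exp_ℝ, Algebra.algebraMap_eq_smul_one] at h
    exact h.symm
  rw [h2, mul_smul_comm, mul_one, mexp]

lemma mexp_entry_continuous (G : Matrix (Fin n) (Fin n) ℝ) (i j : Fin n) :
    Continuous fun x : ℝ => mexp (x • G) i j := by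
  letI : NormedRing (Matrix (Fin n) (Fin n) ℝ) := Matrix.linftyOpNormedRing
  letI : NormedAlgebra ℝ (Matrix (Fin n) (Fin n) ℝ) := Matrix.linftyOpNormedAlgebra
  letI : NormedAlgebra ℚ (Matrix (Fin n) (Fin n) ℝ) := Matrix.linftyOpNormedAlgebra
  have h : Continuous (NormedSpace.exp : Matrix (Fin n) (Fin n) ℝ → _) :=
    NormedSpace.exp_continuous
  have h2 : Continuous fun x : ℝ => x • G := (continuous_id.smul continuous_const)
  exact ((continuous_apply j).comp ((continuous_apply i).comp (h.comp h2)))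

end Stmt4Aux

open Stmt4Aux

section Main

variable {n : ℕ}

lemma mexpE_eq (τ x : ℝ) (W : Matrix (Fin n) (Fin n) ℝ) (i j : Fin n) :
    mexp ((τ⁻¹ * x) • (W - 1)) i j
      = Real.exp (-(τ⁻¹ * x)) * mexp ((τ⁻¹ * x) • W) i j := by
  rw [mexp_smul_sub_one, Matrix.smul_apply, smul_eq_mul]

lemma mexpE_nonneg {W : Matrix (Fin n) (Fin n) ℝ} (hW : Substoch W) {τ x : ℝ}
    (hτ : 0 < τ) (hx : 0 ≤ x) (i j : Fin n) :
    0 ≤ mexp ((τ⁻¹ * x) • (W - 1)) i j := by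
  rw [mexpE_eq]
  exact mul_nonneg (Real.exp_nonneg _)
    (mexp_smul_nonneg hW.1 (by positivity) i j)

lemma mexpE_le_one {W : Matrix (Fin n) (Fin n) ℝ} (hW : Substoch W) {τ x : ℝ}
    (hτ : 0 < τ) (hx : 0 ≤ x) (i j : Fin n) :
    mexp ((τ⁻¹ * x) • (W - 1)) i j ≤ 1 := by
  rw [mexpE_eq]
  have h1 : mexp ((τ⁻¹ * x) • W) i j ≤ Real.exp (τ⁻¹ * x) :=
    mexp_smul_le hW (by positivity) i j
  calc Real.exp (-(τ⁻¹ * x)) * mexp ((τ⁻¹ * x) • W) i j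
      ≤ Real.exp (-(τ⁻¹ * x)) * Real.exp (τ⁻¹ * x) :=
        mul_le_mul_of_nonneg_left h1 (Real.exp_nonneg _)
    _ = 1 := by rw [← Real.exp_add]; simp

lemma mexpE_mono {W₁ W₂ : Matrix (Fin n) (Fin n) ℝ} (h1 : Substoch W₁)
    (hle : ∀ i j, W₁ i j ≤ W₂ i j) {τ x : ℝ} (hτ : 0 < τ) (hx : 0 ≤ x) (i j : Fin n) :
    mexp ((τ⁻¹ * x) • (W₁ - 1)) i j ≤ mexp ((τ⁻¹ * x) • (W₂ - 1)) i j := by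
  rw [mexpE_eq, mexpE_eq]
  exact mul_le_mul_of_nonneg_left
    (mexp_smul_mono h1.1 hle (by positivity) i j) (Real.exp_nonneg _)

lemma mexpE_continuous (τ : ℝ) (W : Matrix (Fin n) (Fin n) ℝ) (i j : Fin n) :
    Continuous fun x : ℝ => mexp ((τ⁻¹ * x) • (W - 1)) i j := by
  have h := mexp_entry_continuous (W - 1) i j
  exact h.comp (continuous_const.mul continuous_id : Continuous fun x : ℝ => τ⁻¹ * x)

lemma one_entry_mem (i j : Fin n) : (0:ℝ) ≤ (1 : Matrix (Fin n) (Fin n) ℝ) i j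
    ∧ (1 : Matrix (Fin n) (Fin n) ℝ) i j ≤ 1 := by
  rw [Matrix.one_apply]
  split <;> norm_num

lemma H_integrable (D : Dat n) (hD : D.Good) {τ : ℝ} (hτ : 0 < τ)
    {W : Matrix (Fin n) (Fin n) ℝ} (hW : Substoch W) (i j : Fin n) :
    IntegrableOn (fun x => D.ν i x * (mexp ((τ⁻¹ * x) • (W - 1)) i j
      - (1 : Matrix (Fin n) (Fin n) ℝ) i j)) (Set.Ioi 0) := by
  have hmeas : AEStronglyMeasurable (fun x => D.ν i x * (mexp ((τ⁻¹ * x) • (W - 1)) i j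
      - (1 : Matrix (Fin n) (Fin n) ℝ) i j)) (volume.restrict (Set.Ioi 0)) := by
    refine AEStronglyMeasurable.mul ?_ ?_
    · exact (hD.hνc i).aestronglyMeasurable measurableSet_Ioi
    · exact ((mexpE_continuous τ W i j).sub continuous_const).aestronglyMeasurable
  refine Integrable.mono' (hD.hνi i) hmeas ?_
  rw [ae_restrict_iff' measurableSet_Ioi]
  refine ae_of_all _ fun x hx => ?_
  have hx' : (0:ℝ) ≤ x := le_of_lt hx
  have h0 := mexpE_nonneg hW hτ hx' i j
  have h1 := mexpE_le_one hW hτ hx' i j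
  have h2 := one_entry_mem (n := n) i j
  rw [Real.norm_eq_abs, abs_mul]
  have : |mexp ((τ⁻¹ * x) • (W - 1)) i j - (1 : Matrix (Fin n) (Fin n) ℝ) i j| ≤ 1 := by
    rw [abs_le]; constructor <;> nlinarith [h2.1, h2.2]
  calc |D.ν i x| * |mexp ((τ⁻¹ * x) • (W - 1)) i j - (1 : Matrix (Fin n) (Fin n) ℝ) i j|
      ≤ |D.ν i x| * 1 := mul_le_mul_of_nonneg_left this (abs_nonneg _)
    _ = D.ν i x := by rw [mul_one, abs_of_nonneg (hD.hν0 i x hx)]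

lemma H_mono (D : Dat n) (hD : D.Good) {τ : ℝ} (hτ : 0 < τ)
    {W₁ W₂ : Matrix (Fin n) (Fin n) ℝ} (h1 : Substoch W₁) (h2 : Substoch W₂)
    (hle : ∀ i j, W₁ i j ≤ W₂ i j) (i j : Fin n) :
    D.H τ W₁ i j ≤ D.H τ W₂ i j := by
  have key : ∀ W : Matrix (Fin n) (Fin n) ℝ, D.H τ W i j
      = ∫ x in Set.Ioi (0:ℝ), D.ν i x * (mexp ((τ⁻¹ * x) • (W - 1)) i j
        - (1 : Matrix (Fin n) (Fin n) ℝ) i j) := by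
    intro W
    simp only [Dat.H, intP, Matrix.of_apply]
    congr 1
    funext x
    rw [Dat.Dν, Matrix.diagonal_mul, Matrix.sub_apply]
  rw [key W₁, key W₂]
  refine setIntegral_mono_on (H_integrable D hD hτ h1 i j)
    (H_integrable D hD hτ h2 i j) measurableSet_Ioi fun x hx => ?_
  exact mul_le_mul_of_nonneg_left
    (by linarith [mexpE_mono h1 hle hτ (le_of_lt hx) i j]) (hD.hν0 i x hx)

lemma K_integrand (D : Dat n) (τ x : ℝ) (W : Matrix (Fin n) (Fin n) ℝ) (i j : Fin n) :
    (D.Qμ x * mexp ((τ⁻¹ * x) • (W - 1)) : Matrix (Fin n) (Fin n) ℝ) i j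
      = ∑ k, D.Q i k * D.μ i k x * mexp ((τ⁻¹ * x) • (W - 1)) k j := by
  rw [Matrix.mul_apply]
  simp [Dat.Qμ]

lemma Qμ_nonneg (D : Dat n) (hD : D.Good) {x : ℝ} (hx : x ∈ Set.Ioi (0:ℝ)) (i k : Fin n) :
    0 ≤ D.Q i k * D.μ i k x := by
  rcases eq_or_ne i k with h | h
  · subst h; rw [hD.hμd]; simp
  · exact mul_nonneg (hD.hQoff i k h) (hD.hμ0 i k x hx)

lemma Qμ_bound_integrable (D : Dat n) (hD : D.Good) (i : Fin n) :
    IntegrableOn (fun x => ∑ k, D.Q i k * D.μ i k x) (Set.Ioi (0:ℝ)) := by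
  refine integrable_finset_sum _ fun k _ => ?_
  rcases eq_or_ne i k with h | h
  · subst h
    simp only [hD.hμd, mul_zero]
    exact integrable_zero _ _ _
  · exact (hD.hμi i k h).const_mul _

lemma K_integrable (D : Dat n) (hD : D.Good) {τ : ℝ} (hτ : 0 < τ)
    {W : Matrix (Fin n) (Fin n) ℝ} (hW : Substoch W) (i j : Fin n) :
    IntegrableOn (fun x => ∑ k, D.Q i k * D.μ i k x * mexp ((τ⁻¹ * x) • (W - 1)) k j)
      (Set.Ioi 0) := by
  have hmeas : AEStronglyMeasurable
      (fun x => ∑ k, D.Q i k * D.μ i k x * mexp ((τ⁻¹ * x) • (W - 1)) k j)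
      (volume.restrict (Set.Ioi 0)) := by
    refine Finset.aestronglyMeasurable_fun_sum _ fun k _ => ?_
    refine AEStronglyMeasurable.mul ?_
      ((mexpE_continuous τ W k j).aestronglyMeasurable)
    rcases eq_or_ne i k with h | h
    · subst h
      simp only [hD.hμd, mul_zero]
      exact aestronglyMeasurable_const
    · exact (aestronglyMeasurable_const.mul
        ((hD.hμc i k h).aestronglyMeasurable measurableSet_Ioi))
  refine Integrable.mono' (Qμ_bound_integrable D hD i) hmeas ?_
  rw [ae_restrict_iff' measurableSet_Ioi]
  refine ae_of_all _ fun x hx => ?_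
  have hx' : (0:ℝ) ≤ x := le_of_lt hx
  calc ‖∑ k, D.Q i k * D.μ i k x * mexp ((τ⁻¹ * x) • (W - 1)) k j‖
      ≤ ∑ k, ‖D.Q i k * D.μ i k x * mexp ((τ⁻¹ * x) • (W - 1)) k j‖ :=
        norm_sum_le _ _
    _ ≤ ∑ k, D.Q i k * D.μ i k x := by
        refine Finset.sum_le_sum fun k _ => ?_
        rw [Real.norm_eq_abs, abs_mul, abs_of_nonneg (Qμ_nonneg D hD hx i k),
          abs_of_nonneg (mexpE_nonneg hW hτ hx' k j)]
        simpa using mul_le_mul_of_nonneg_left (mexpE_le_one hW hτ hx' k j)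
          (Qμ_nonneg D hD hx i k)

lemma K_mono (D : Dat n) (hD : D.Good) {τ : ℝ} (hτ : 0 < τ)
    {W₁ W₂ : Matrix (Fin n) (Fin n) ℝ} (h1 : Substoch W₁) (h2 : Substoch W₂)
    (hle : ∀ i j, W₁ i j ≤ W₂ i j) (i j : Fin n) :
    D.K τ W₁ i j ≤ D.K τ W₂ i j := by
  have key : ∀ W : Matrix (Fin n) (Fin n) ℝ, D.K τ W i j
      = Matrix.hadamard D.Q D.U0 i j
        + ∫ x in Set.Ioi (0:ℝ), ∑ k, D.Q i k * D.μ i k x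
            * mexp ((τ⁻¹ * x) • (W - 1)) k j := by
    intro W
    simp only [Dat.K, Matrix.add_apply, intP, Matrix.of_apply, K_integrand]
  rw [key W₁, key W₂]
  refine add_le_add_right ?_ _
  refine setIntegral_mono_on (K_integrable D hD hτ h1 i j)
    (K_integrable D hD hτ h2 i j) measurableSet_Ioi fun x hx => ?_
  refine Finset.sum_le_sum fun k _ => ?_
  exact mul_le_mul_of_nonneg_left (mexpE_mono h1 hle hτ (le_of_lt hx) k j)
    (Qμ_nonneg D hD hx i k)

end Main

/-- Lemma 5 of the paper: monotonicity of `B̃₋₁(τ,·)`. -/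
theorem stmt4 {n : ℕ} (D : Dat n) (hD : D.Good) (troot : Fin n → ℝ) (τ : ℝ)
    (hτ : D.TauOK troot τ) (W₁ W₂ : Matrix (Fin n) (Fin n) ℝ)
    (h1 : Substoch W₁) (h2 : Substoch W₂) (hle : ∀ i j, W₁ i j ≤ W₂ i j) :
    ∀ i j, D.Btm1 τ W₁ i j ≤ D.Btm1 τ W₂ i j := by
  obtain ⟨htroot, hτ0, hτa, hτt⟩ := hτ
  intro i j
  set d : Fin n → ℝ := fun i' => 2 * τ * D.a i' - 2 * (D.s i') ^ 2 with hd
  have hB0 : D.B0 τ = Matrix.diagonal d := by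
    ext i' j'
    rcases eq_or_ne i' j' with h | h
    · subst h
      simp only [Dat.B0, Dat.Da, Dat.Ds, Matrix.sub_apply, Matrix.smul_apply,
        Matrix.diagonal_apply_eq, smul_eq_mul, hd]
      try ring
    · simp [Dat.B0, Dat.Da, Dat.Ds, Matrix.sub_apply, Matrix.diagonal_apply_ne _ h, h]
  have hdneg : ∀ i', d i' < 0 := by
    intro i'
    have hs := hD.hs i'
    rcases le_or_gt (D.a i') 0 with h | h
    · have h1 : 2 * τ * D.a i' ≤ 0 := by nlinarith
      have h2 : (0:ℝ) < (D.s i') ^ 2 := by positivity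
      simp only [hd]
      nlinarith
    · have h3 := hτa i' h
      have h4 : τ * D.a i' < (D.s i') ^ 2 := by
        have := (lt_div_iff₀ h).mp h3
        linarith
      simp only [hd]
      nlinarith
  have hdne : ∀ i', d i' ≠ 0 := fun i' => (hdneg i').ne
  have hinv : (D.B0 τ)⁻¹ = Matrix.diagonal fun i' => (d i')⁻¹ := by
    rw [hB0]
    refine Matrix.inv_eq_right_inv ?_
    have he : (fun i' => d i' * (d i')⁻¹) = fun _ => (1:ℝ) := by
      funext i'
      exact mul_inv_cancel₀ (hdne i')
    rw [Matrix.diagonal_mul_diagonal, he, Matrix.diagonal_one]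
  have hBtm : ∀ W, D.Btm1 τ W i j = (-(d i)⁻¹) * D.Bm1 τ W i j := by
    intro W
    rw [Dat.Btm1, hinv]
    have : -(Matrix.diagonal fun i' => (d i')⁻¹)
        = Matrix.diagonal fun i' => -(d i')⁻¹ := by
      rw [Matrix.diagonal_neg]
    rw [this, Matrix.diagonal_mul]
  rw [hBtm W₁, hBtm W₂]
  have hc : 0 ≤ -(d i)⁻¹ := by
    have : (d i)⁻¹ < 0 := inv_lt_zero.mpr (hdneg i)
    linarith
  refine mul_le_mul_of_nonneg_left ?_ hc
  have hBm : ∀ W, D.Bm1 τ W i j = D.Ds i j - (2 * τ) * D.Da i j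
      + (2 * τ ^ 2) * (D.H τ W i j + D.K τ W i j) := by
    intro W
    simp [Dat.Bm1, Matrix.sub_apply, Matrix.add_apply, Matrix.smul_apply, smul_eq_mul]
    ring
  rw [hBm W₁, hBm W₂]
  have hH := H_mono D hD hτ0 h1 h2 hle i j
  have hK := K_mono D hD hτ0 h1 h2 hle i j
  have h2τ : (0:ℝ) ≤ 2 * τ ^ 2 := by positivity
  nlinarith
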